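/- Let N and K be positive integers, let D be an invertible real N×N matrix with D·Dᵀ ⪯ I (i.e., I − D·Dᵀ is positive semidefinite), let H_1, ..., H_K be real N×N matrices, and set H_{k,e} = D·H_k for each k. For real symmetric positive semidefinite N×N matrices X_1, ..., X_K define f(X_1, ..., X_K) = (1/2)·log det(I + Σ_{k=1}^{K} H_k X_k H_kᵀ) − (1/2)·log det(I + Σ_{k=1}^{K} H_{k,e} X_k H_{k,e}ᵀ). Then f is concave on K-tuples of positive semidefinite matrices: for any two such tuples (X_1,...,X_K), (Y_1,...,Y_K) and any θ ∈ [0,1], f(θX_1 + (1−θ)Y_1, ..., θX_K + (1−θ)Y_K) ≥ θ·f(X_1,...,X_K) + (1−θ)·f(Y_1,...,Y_K). -/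

import Mathlib

open Matrix Finset Real


section Helpers

variable {N : ℕ}


/-- Hölder: `∑ xᵢ^θ yᵢ^(1-θ) ≤ (∑x)^θ (∑y)^(1-θ)` for nonneg `x y`, `θ ∈ [0,1]`. -/
lemma holder_sum {ι : Type*} [Fintype ι] {x y : ι → ℝ} (hx : ∀ i, 0 ≤ x i)
    (hy : ∀ i, 0 ≤ y i) {θ : ℝ} (hθ0 : 0 ≤ θ) (hθ1 : θ ≤ 1) :
    ∑ i, (x i) ^ θ * (y i) ^ (1 - θ) ≤ (∑ i, x i) ^ θ * (∑ i, y i) ^ (1 - θ) := by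
  rcases eq_or_lt_of_le hθ0 with h0 | h0
  · simp [← h0]
  rcases eq_or_lt_of_le hθ1 with h1 | h1
  · simp [h1]
  have hX : 0 ≤ ∑ i, x i := Finset.sum_nonneg fun i _ => hx i
  have hY : 0 ≤ ∑ i, y i := Finset.sum_nonneg fun i _ => hy i
  rcases eq_or_lt_of_le hX with hX0 | hX0
  · have : ∀ i, x i = 0 := by
      intro i
      have := Finset.sum_eq_zero_iff_of_nonneg (fun i _ => hx i) |>.mp hX0.symm
      exact this i (Finset.mem_univ i)
    simp only [this, Real.zero_rpow (ne_of_gt h0), zero_mul, Finset.sum_const_zero]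
    positivity
  rcases eq_or_lt_of_le hY with hY0 | hY0
  · have : ∀ i, y i = 0 := by
      intro i
      have := Finset.sum_eq_zero_iff_of_nonneg (fun i _ => hy i) |>.mp hY0.symm
      exact this i (Finset.mem_univ i)
    simp only [this, Real.zero_rpow (ne_of_gt (sub_pos.mpr h1)), mul_zero,
      Finset.sum_const_zero]
    positivity
  set X := ∑ i, x i
  set Y := ∑ i, y i
  have key : ∀ i, (x i) ^ θ * (y i) ^ (1 - θ)
      ≤ X ^ θ * Y ^ (1 - θ) * (θ * (x i / X) + (1 - θ) * (y i / Y)) := by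
    intro i
    have hle : (x i / X) ^ θ * (y i / Y) ^ (1 - θ)
        ≤ θ * (x i / X) + (1 - θ) * (y i / Y) :=
      Real.geom_mean_le_arith_mean2_weighted hθ0 (by linarith)
        (div_nonneg (hx i) hX) (div_nonneg (hy i) hY) (by ring)
    have heq : (x i / X) ^ θ * (y i / Y) ^ (1 - θ)
        = (x i) ^ θ * (y i) ^ (1 - θ) / (X ^ θ * Y ^ (1 - θ)) := by
      rw [Real.div_rpow (hx i) hX, Real.div_rpow (hy i) hY]
      ring
    rw [heq, div_le_iff₀ (by positivity)] at hle
    linarith [hle]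
  calc ∑ i, (x i) ^ θ * (y i) ^ (1 - θ)
      ≤ ∑ i, X ^ θ * Y ^ (1 - θ) * (θ * (x i / X) + (1 - θ) * (y i / Y)) :=
        Finset.sum_le_sum fun i _ => key i
    _ = X ^ θ * Y ^ (1 - θ) := by
        rw [← Finset.mul_sum]
        have : ∑ i, (θ * (x i / X) + (1 - θ) * (y i / Y)) = 1 := by
          rw [Finset.sum_add_distrib, ← Finset.mul_sum, ← Finset.mul_sum,
            ← Finset.sum_div, ← Finset.sum_div]
          rw [div_self (ne_of_gt hX0), div_self (ne_of_gt hY0)]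
          ring
        rw [this, mul_one]

/-- Core scalar inequality. -/
lemma scalar_key {ι : Type*} [Fintype ι] {c δ : ι → ℝ} (hc : ∀ i, 0 ≤ c i)
    (hδ : ∀ i, 0 < δ i) {θ : ℝ} (hθ0 : 0 ≤ θ) (hθ1 : θ ≤ 1) :
    Real.log (1 + ∑ i, c i / (θ + (1 - θ) * δ i))
      ≤ θ * Real.log (1 + ∑ i, c i) + (1 - θ) * Real.log (1 + ∑ i, c i / δ i) := by
  have hd : ∀ i, 0 < θ + (1 - θ) * δ i := by
    intro i
    rcases eq_or_lt_of_le hθ0 with h | h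
    · simpa [← h] using hδ i
    · have : 0 ≤ (1 - θ) * δ i := mul_nonneg (by linarith) (hδ i).le
      linarith
  have hcs : 0 ≤ ∑ i, c i := Finset.sum_nonneg fun i _ => hc i
  have hX : (0:ℝ) < 1 + ∑ i, c i := by linarith
  have hY : (0:ℝ) < 1 + ∑ i, c i / δ i := by
    have : 0 ≤ ∑ i, c i / δ i := Finset.sum_nonneg fun i _ => div_nonneg (hc i) (hδ i).le
    linarith
  -- define x, y over Option ι
  set x : Option ι → ℝ := fun o => o.elim 1 c with hxdef
  set y : Option ι → ℝ := fun o => o.elim 1 (fun i => c i / δ i) with hydef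
  have hxn : ∀ o, 0 ≤ x o := by rintro (_ | i) <;> simp [hxdef, hc]
  have hyn : ∀ o, 0 ≤ y o := by
    rintro (_ | i) <;> simp [hydef]
    exact div_nonneg (hc _) (hδ _).le
  have hsum_x : ∑ o, x o = 1 + ∑ i, c i := by
    rw [Fintype.sum_option]; simp [hxdef]
  have hsum_y : ∑ o, y o = 1 + ∑ i, c i / δ i := by
    rw [Fintype.sum_option]; simp [hydef]
  have step1 : 1 + ∑ i, c i / (θ + (1 - θ) * δ i) ≤ ∑ o, (x o) ^ θ * (y o) ^ (1 - θ) := by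
    rw [Fintype.sum_option]
    have h1 : (x none) ^ θ * (y none) ^ (1 - θ) = 1 := by simp [hxdef, hydef]
    rw [h1]
    gcongr 1 + ?_
    apply Finset.sum_le_sum
    intro i _
    -- c i / (θ + (1-θ) δ i) ≤ c i ^ θ * (c i / δ i)^(1-θ)
    show c i / (θ + (1 - θ) * δ i) ≤ (c i) ^ θ * (c i / δ i) ^ (1 - θ)
    have hamgm : (δ i) ^ (1 - θ) ≤ θ + (1 - θ) * δ i := by
      have := Real.geom_mean_le_arith_mean2_weighted hθ0 (by linarith : (0:ℝ) ≤ 1 - θ)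
        zero_le_one (hδ i).le (by ring)
      simpa using this
    rcases eq_or_lt_of_le (hc i) with hc0 | hc0
    · rcases eq_or_lt_of_le hθ0 with h | h
      · simp [← hc0, ← h]
      · simp [← hc0, Real.zero_rpow (ne_of_gt h)]
    · have hδp : (0:ℝ) < (δ i) ^ (1 - θ) := Real.rpow_pos_of_pos (hδ i) _
      have hrw : (c i) ^ θ * (c i / δ i) ^ (1 - θ) = c i / (δ i) ^ (1 - θ) := by
        rw [Real.div_rpow (hc i) (hδ i).le, ← mul_div_assoc, ← Real.rpow_add hc0]
        norm_num
      rw [hrw]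
      apply div_le_div_of_nonneg_left (hc i) hδp hamgm
  have step2 := holder_sum hxn hyn hθ0 hθ1
  rw [hsum_x, hsum_y] at step2
  have : Real.log (1 + ∑ i, c i / (θ + (1 - θ) * δ i))
      ≤ Real.log ((1 + ∑ i, c i) ^ θ * (1 + ∑ i, c i / δ i) ^ (1 - θ)) := by
    apply Real.log_le_log
    · have : 0 ≤ ∑ i, c i / (θ + (1 - θ) * δ i) :=
        Finset.sum_nonneg fun i _ => div_nonneg (hc i) (hd i).le
      linarith
    · exact le_trans step1 step2
  rw [Real.log_mul (by positivity) (by positivity), Real.log_rpow hX, Real.log_rpow hY] at this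
  linarith

/-- quadratic form of a PSD matrix over ℝ is nonneg -/
lemma psd_quad_nonneg {M : Matrix (Fin N) (Fin N) ℝ} (hM : M.PosSemidef) (v : Fin N → ℝ) :
    0 ≤ v ⬝ᵥ M *ᵥ v := by
  have := hM.dotProduct_mulVec_nonneg v
  simpa using this

lemma pd_quad_pos {M : Matrix (Fin N) (Fin N) ℝ} (hM : M.PosDef) {v : Fin N → ℝ} (hv : v ≠ 0) :
    0 < v ⬝ᵥ M *ᵥ v := by
  have := hM.dotProduct_mulVec_pos hv
  simpa using this

/-- real symmetric convex combination of PosDef is PosDef -/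
lemma posDef_convex {A B : Matrix (Fin N) (Fin N) ℝ} (hA : A.PosDef) (hB : B.PosDef)
    {θ : ℝ} (hθ0 : 0 ≤ θ) (hθ1 : θ ≤ 1) : (θ • A + (1 - θ) • B).PosDef := by
  refine Matrix.PosDef.of_dotProduct_mulVec_pos ?_ ?_
  · show (θ • A + (1 - θ) • B)ᴴ = _
    rw [conjTranspose_add, conjTranspose_smul, conjTranspose_smul, hA.1, hB.1,
      star_trivial, star_trivial]
  · intro x hx
    have hxA := hA.dotProduct_mulVec_pos hx
    have hxB := hB.dotProduct_mulVec_pos hx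
    have h1 : star x ⬝ᵥ (θ • A + (1 - θ) • B) *ᵥ x
        = θ * (star x ⬝ᵥ A *ᵥ x) + (1 - θ) * (star x ⬝ᵥ B *ᵥ x) := by
      rw [Matrix.add_mulVec, dotProduct_add, Matrix.smul_mulVec,
        Matrix.smul_mulVec, dotProduct_smul, dotProduct_smul, smul_eq_mul, smul_eq_mul]
    rw [h1]
    rcases eq_or_lt_of_le hθ0 with h | h
    · rw [← h]; simpa using hxB
    · have : 0 ≤ (1 - θ) * (star x ⬝ᵥ B *ᵥ x) := mul_nonneg (by linarith) hxB.le
      nlinarith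

/-- quadratic form of inverse of `P * diagonal d * Pᵀ` -/
lemma quad_diag (P : Matrix (Fin N) (Fin N) ℝ) (hP : IsUnit P.det) (d : Fin N → ℝ)
    (hd : ∀ i, d i ≠ 0) (v : Fin N → ℝ) :
    v ⬝ᵥ (P * diagonal d * Pᵀ)⁻¹ *ᵥ v = ∑ i, (P⁻¹ *ᵥ v) i ^ 2 / d i := by
  have hdiag : (diagonal d)⁻¹ = diagonal (fun i => (d i)⁻¹) := by
    apply Matrix.inv_eq_right_inv
    rw [diagonal_mul_diagonal]
    convert Matrix.diagonal_one using 2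
    exact funext fun i => mul_inv_cancel₀ (hd i)
  have h1 : (P * diagonal d * Pᵀ)⁻¹ = (P⁻¹)ᵀ * (diagonal (fun i => (d i)⁻¹) * P⁻¹) := by
    rw [Matrix.mul_inv_rev, Matrix.mul_inv_rev, hdiag, ← Matrix.mul_assoc,
      Matrix.transpose_nonsing_inv, Matrix.mul_assoc]
  rw [h1, ← Matrix.mulVec_mulVec, Matrix.dotProduct_mulVec, Matrix.vecMul_transpose,
    ← Matrix.mulVec_mulVec]
  simp only [dotProduct, Matrix.mulVec_diagonal]
  refine Finset.sum_congr rfl fun i _ => ?_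
  field_simp

/-- Matrix determinant lemma. -/
lemma det_add_vecMulVec (A : Matrix (Fin N) (Fin N) ℝ) (hA : IsUnit A.det) (w : Fin N → ℝ) :
    (A + vecMulVec w w).det = A.det * (1 + w ⬝ᵥ A⁻¹ *ᵥ w) := by
  have h1 : A + vecMulVec w w = A * (1 + A⁻¹ * vecMulVec w w) := by
    rw [mul_add, mul_one, Matrix.mul_nonsing_inv_cancel_left _ _ hA]
  have h2 : A⁻¹ * vecMulVec w w = vecMulVec (A⁻¹ *ᵥ w) w := by
    ext i j
    simp only [Matrix.mul_apply, vecMulVec_apply, Matrix.mulVec, dotProduct]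
    rw [Finset.sum_mul]
    exact Finset.sum_congr rfl fun k _ => by ring
  rw [h1, det_mul, h2, vecMulVec_eq Unit, Matrix.det_one_add_replicateCol_mul_replicateRow]

/-- vecMulVec w w is PSD over ℝ -/
lemma vecMulVec_posSemidef (w : Fin N → ℝ) : (vecMulVec w w).PosSemidef := by
  have : vecMulVec w w = (replicateCol Unit w) * (replicateCol Unit w)ᴴ := by
    rw [vecMulVec_eq Unit, conjTranspose_eq_transpose_of_trivial]
    rfl
  rw [this]
  exact posSemidef_self_mul_conjTranspose _

open scoped MatrixOrder in
/-- PSD decomposition into rank-one pieces -/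
lemma psd_decomp {M : Matrix (Fin N) (Fin N) ℝ} (hM : M.PosSemidef) :
    ∃ w : Fin N → (Fin N → ℝ), M = ∑ j, vecMulVec (w j) (w j) := by
  obtain ⟨B, hB⟩ := CStarAlgebra.nonneg_iff_eq_star_mul_self.mp hM.nonneg
  refine ⟨fun j i => B j i, ?_⟩
  rw [hB]
  ext i k
  rw [star_eq_conjTranspose, conjTranspose_eq_transpose_of_trivial, Matrix.mul_apply, Matrix.sum_apply]
  exact Finset.sum_congr rfl fun j _ => by simp [vecMulVec_apply]

open scoped MatrixOrder in
/-- Simultaneous congruence: two PD real matrices can be written `P Pᵀ` and `P Δ Pᵀ`. -/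
lemma exists_rep {A B : Matrix (Fin N) (Fin N) ℝ} (hA : A.PosDef) (hB : B.PosDef) :
    ∃ (P : Matrix (Fin N) (Fin N) ℝ) (δ : Fin N → ℝ), IsUnit P.det ∧ (∀ i, 0 < δ i) ∧
      A = P * Pᵀ ∧ B = P * diagonal δ * Pᵀ := by
  set S := CFC.sqrt A with hSdef
  have hSpsd : S.PosSemidef := (CFC.sqrt_nonneg A).posSemidef
  have hSS : S * S = A := CFC.sqrt_mul_sqrt_self A hA.posSemidef.nonneg
  have hSsymm : Sᵀ = S := by
    rw [← conjTranspose_eq_transpose_of_trivial]; exact hSpsd.1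
  have hSdet : IsUnit S.det := by
    have : S.det * S.det = A.det := by rw [← det_mul, hSS]
    have hApos := hA.det_pos
    refine isUnit_iff_ne_zero.mpr fun h => ?_
    rw [h, mul_zero] at this
    exact absurd this.symm (ne_of_gt hApos)
  have hSinv_symm : (S⁻¹)ᵀ = S⁻¹ := by rw [Matrix.transpose_nonsing_inv, hSsymm]
  -- R = S⁻¹ B S⁻¹ is PD
  set R := S⁻¹ * B * S⁻¹ with hRdef
  have hRherm : R.IsHermitian := by
    show Rᴴ = R
    rw [conjTranspose_eq_transpose_of_trivial, hRdef, transpose_mul, transpose_mul,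
      hSinv_symm, ← conjTranspose_eq_transpose_of_trivial B, hB.1, Matrix.mul_assoc]
  have hRpd : R.PosDef := by
    refine Matrix.PosDef.of_dotProduct_mulVec_pos hRherm fun x hx => ?_
    have hxS : S⁻¹ *ᵥ x ≠ 0 := by
      intro h
      apply hx
      have : S *ᵥ (S⁻¹ *ᵥ x) = x := by
        rw [Matrix.mulVec_mulVec, Matrix.mul_nonsing_inv _ hSdet, Matrix.one_mulVec]
      rw [← this, h, Matrix.mulVec_zero]
    have := hB.dotProduct_mulVec_pos hxS
    simp only [star_trivial] at this ⊢
    have hvm : x ᵥ* S⁻¹ = S⁻¹ *ᵥ x := by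
      conv_lhs => rw [← hSinv_symm]
      rw [Matrix.vecMul_transpose]
    have heq : x ⬝ᵥ R *ᵥ x = (S⁻¹ *ᵥ x) ⬝ᵥ B *ᵥ (S⁻¹ *ᵥ x) := by
      rw [hRdef, ← Matrix.mulVec_mulVec, ← Matrix.mulVec_mulVec,
        Matrix.dotProduct_mulVec x, hvm]
    rw [heq]
    simpa using this
  -- spectral theorem for R
  have hspec := hRherm.spectral_theorem
  set V : Matrix (Fin N) (Fin N) ℝ := (hRherm.eigenvectorUnitary : Matrix (Fin N) (Fin N) ℝ)
    with hVdef
  have hVmem := hRherm.eigenvectorUnitary.2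
  have hVstar : V * Vᴴ = 1 := Unitary.mul_star_self_of_mem hVmem
  have hstarV : Vᴴ * V = 1 := Unitary.star_mul_self_of_mem hVmem
  have hspec' : R = V * diagonal (RCLike.ofReal ∘ hRherm.eigenvalues) * Vᴴ := hspec
  have hVdet : IsUnit V.det := by
    have : V.det * (Vᴴ).det = 1 := by rw [← det_mul, hVstar, det_one]
    exact IsUnit.of_mul_eq_one _ this
  have hofReal : (RCLike.ofReal ∘ hRherm.eigenvalues : Fin N → ℝ) = hRherm.eigenvalues := by
    rw [RCLike.ofReal_real_eq_id]; rfl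
  rw [hofReal] at hspec'
  refine ⟨S * V, hRherm.eigenvalues, ?_, fun i => hRpd.eigenvalues_pos i, ?_, ?_⟩
  · rw [det_mul]; exact hSdet.mul hVdet
  · rw [transpose_mul, hSsymm, ← Matrix.mul_assoc, Matrix.mul_assoc S V,
      ← conjTranspose_eq_transpose_of_trivial V, hVstar, Matrix.mul_one, hSS]
  · have hVstar' : Vᵀ = Vᴴ := (conjTranspose_eq_transpose_of_trivial V).symm
    rw [transpose_mul, hSsymm, hVstar']
    have hcalc : S * V * diagonal hRherm.eigenvalues * (Vᴴ * S) = B := by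
      calc S * V * diagonal hRherm.eigenvalues * (Vᴴ * S)
          = S * (V * diagonal hRherm.eigenvalues * Vᴴ) * S := by
            simp only [Matrix.mul_assoc]
        _ = S * R * S := by rw [← hspec']
        _ = B := by
            rw [hRdef, ← Matrix.mul_assoc, ← Matrix.mul_assoc, Matrix.mul_nonsing_inv _ hSdet,
              Matrix.one_mul, Matrix.mul_assoc, Matrix.nonsing_inv_mul _ hSdet, Matrix.mul_one]
    rw [← hcalc]

lemma key_log {A B : Matrix (Fin N) (Fin N) ℝ} (hA : A.PosDef) (hB : B.PosDef)
    (v : Fin N → ℝ) {θ : ℝ} (hθ0 : 0 ≤ θ) (hθ1 : θ ≤ 1) :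
    Real.log (1 + v ⬝ᵥ (θ • A + (1 - θ) • B)⁻¹ *ᵥ v)
      ≤ θ * Real.log (1 + v ⬝ᵥ A⁻¹ *ᵥ v) + (1 - θ) * Real.log (1 + v ⬝ᵥ B⁻¹ *ᵥ v) := by
  obtain ⟨P, δ, hP, hδ, hArep, hBrep⟩ := exists_rep hA hB
  have hsm : ∀ (c : ℝ) (d : Fin N → ℝ),
      c • (P * diagonal d * Pᵀ) = P * diagonal (fun i => c * d i) * Pᵀ := by
    intro c d
    rw [show diagonal (fun i => c * d i) = c • diagonal d by
      rw [← Matrix.diagonal_smul]; rfl]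
    rw [Matrix.mul_smul, Matrix.smul_mul]
  have hA1 : A = P * diagonal (fun _ => (1:ℝ)) * Pᵀ := by
    rw [show diagonal (fun _ : Fin N => (1:ℝ)) = 1 from Matrix.diagonal_one, Matrix.mul_one,
      hArep]
  have hC : θ • A + (1 - θ) • B = P * diagonal (fun i => θ + (1 - θ) * δ i) * Pᵀ := by
    rw [hA1, hBrep, hsm, hsm, ← Matrix.add_mul, ← Matrix.mul_add, Matrix.diagonal_add]
    congr 2
    funext i
    simp
  have hθd : ∀ i, θ + (1 - θ) * δ i ≠ 0 := by
    intro i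
    rcases eq_or_lt_of_le hθ0 with h | h
    · simp only [← h, zero_add, one_mul, sub_zero]
      exact (hδ i).ne'
    · have : 0 ≤ (1 - θ) * δ i := mul_nonneg (by linarith) (hδ i).le
      positivity
  rw [hC, hA1, hBrep, quad_diag P hP _ hθd v, quad_diag P hP _ (fun i => one_ne_zero) v,
    quad_diag P hP _ (fun i => (hδ i).ne') v]
  simp only [div_one]
  exact scalar_key (fun i => sq_nonneg _) hδ hθ0 hθ1

lemma step_ineq {A B : Matrix (Fin N) (Fin N) ℝ} (hA : A.PosDef) (hB : B.PosDef)
    (w : Fin N → ℝ) {θ : ℝ} (hθ0 : 0 ≤ θ) (hθ1 : θ ≤ 1) :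
    θ * (Real.log A.det - Real.log (A + vecMulVec w w).det)
      + (1 - θ) * (Real.log B.det - Real.log (B + vecMulVec w w).det)
      ≤ Real.log (θ • A + (1 - θ) • B).det
        - Real.log ((θ • A + (1 - θ) • B) + vecMulVec w w).det := by
  have hC := posDef_convex hA hB hθ0 hθ1
  have expand : ∀ (M : Matrix (Fin N) (Fin N) ℝ), M.PosDef →
      Real.log (M + vecMulVec w w).det
        = Real.log M.det + Real.log (1 + w ⬝ᵥ M⁻¹ *ᵥ w) := by
    intro M hM
    have hq : 0 ≤ w ⬝ᵥ M⁻¹ *ᵥ w := psd_quad_nonneg hM.inv.posSemidef w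
    rw [det_add_vecMulVec M hM.det_pos.ne'.isUnit w,
      Real.log_mul (ne_of_gt hM.det_pos) (by linarith)]
  rw [expand A hA, expand B hB, expand _ hC]
  have hk := key_log hA hB w hθ0 hθ1
  nlinarith [hk]

lemma main_concave {A B M : Matrix (Fin N) (Fin N) ℝ} (hA : A.PosDef) (hB : B.PosDef)
    (hM : M.PosSemidef) {θ : ℝ} (hθ0 : 0 ≤ θ) (hθ1 : θ ≤ 1) :
    θ * (Real.log A.det - Real.log (A + M).det)
      + (1 - θ) * (Real.log B.det - Real.log (B + M).det)
      ≤ Real.log (θ • A + (1 - θ) • B).det - Real.log ((θ • A + (1 - θ) • B) + M).det := by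
  obtain ⟨w, hw⟩ := psd_decomp hM
  set W : ℕ → Matrix (Fin N) (Fin N) ℝ :=
    fun m => if h : m < N then vecMulVec (w ⟨m, h⟩) (w ⟨m, h⟩) else 0 with hWdef
  set Ms : ℕ → Matrix (Fin N) (Fin N) ℝ := fun m => ∑ j ∈ Finset.range m, W j with hMsdef
  have hWfin : ∀ j : Fin N, W (j : ℕ) = vecMulVec (w j) (w j) := by
    intro j
    simp [hWdef, j.isLt]
  have hMsN : Ms N = M := by
    show (∑ j ∈ Finset.range N, W j) = M
    rw [hw, ← Fin.sum_univ_eq_sum_range W N]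
    exact Finset.sum_congr rfl fun j _ => hWfin j
  have hW_psd : ∀ j, (W j).PosSemidef := by
    intro j
    by_cases h : j < N
    · rw [hWdef]; simp only [h, dif_pos]; exact vecMulVec_posSemidef _
    · rw [hWdef]; simp only [h, dif_neg, not_false_iff]; exact PosSemidef.zero
  have hMs_psd : ∀ m, (Ms m).PosSemidef := by
    intro m
    induction m with
    | zero => simp [hMsdef]; exact PosSemidef.zero
    | succ k ih =>
        have : Ms (k + 1) = Ms k + W k := by
          show (∑ j ∈ Finset.range (k + 1), W j) = (∑ j ∈ Finset.range k, W j) + W k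
          rw [Finset.sum_range_succ]
        rw [this]
        exact ih.add (hW_psd k)
  have hMs0 : Ms 0 = 0 := by simp [hMsdef]
  have tele : ∀ C : Matrix (Fin N) (Fin N) ℝ, Real.log C.det - Real.log (C + M).det
      = ∑ j ∈ Finset.range N,
          (Real.log (C + Ms j).det - Real.log (C + Ms (j + 1)).det) := by
    intro C
    rw [Finset.sum_range_sub' (fun j => Real.log (C + Ms j).det) N, hMs0, hMsN, add_zero]
  rw [tele A, tele B, tele (θ • A + (1 - θ) • B), Finset.mul_sum, Finset.mul_sum,
    ← Finset.sum_add_distrib]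
  apply Finset.sum_le_sum
  intro j hj
  have hjN : j < N := Finset.mem_range.mp hj
  have hWj : W j = vecMulVec (w ⟨j, hjN⟩) (w ⟨j, hjN⟩) := dif_pos hjN
  have hMsucc : ∀ C : Matrix (Fin N) (Fin N) ℝ,
      C + Ms (j + 1) = (C + Ms j) + vecMulVec (w ⟨j, hjN⟩) (w ⟨j, hjN⟩) := by
    intro C
    have : Ms (j + 1) = Ms j + vecMulVec (w ⟨j, hjN⟩) (w ⟨j, hjN⟩) := by
      show (∑ i ∈ Finset.range (j + 1), W i) = (∑ i ∈ Finset.range j, W i) + _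
      rw [Finset.sum_range_succ, hWj]
    rw [this, add_assoc]
  rw [hMsucc, hMsucc, hMsucc]
  have hA' := hA.add_posSemidef (hMs_psd j)
  have hB' := hB.add_posSemidef (hMs_psd j)
  have hcomb : (θ • A + (1 - θ) • B) + Ms j = θ • (A + Ms j) + (1 - θ) • (B + Ms j) := by
    rw [smul_add, smul_add]
    module
  rw [hcomb]
  exact step_ineq hA' hB' _ hθ0 hθ1

lemma psd_sum {ι : Type*} [Fintype ι] (f : ι → Matrix (Fin N) (Fin N) ℝ)
    (h : ∀ i, (f i).PosSemidef) : (∑ i, f i).PosSemidef :=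
  Finset.sum_induction f _ (fun _ _ ha hb => ha.add hb) PosSemidef.zero fun i _ => h i

lemma psd_convex {A B : Matrix (Fin N) (Fin N) ℝ} (hA : A.PosSemidef) (hB : B.PosSemidef)
    {θ : ℝ} (hθ0 : 0 ≤ θ) (hθ1 : θ ≤ 1) : (θ • A + (1 - θ) • B).PosSemidef := by
  refine Matrix.PosSemidef.of_dotProduct_mulVec_nonneg ?_ ?_
  · show (θ • A + (1 - θ) • B)ᴴ = _
    rw [conjTranspose_add, conjTranspose_smul, conjTranspose_smul, hA.1, hB.1,
      star_trivial, star_trivial]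
  · intro x
    have hxA := hA.dotProduct_mulVec_nonneg x
    have hxB := hB.dotProduct_mulVec_nonneg x
    have h1 : star x ⬝ᵥ (θ • A + (1 - θ) • B) *ᵥ x
        = θ * (star x ⬝ᵥ A *ᵥ x) + (1 - θ) * (star x ⬝ᵥ B *ᵥ x) := by
      rw [Matrix.add_mulVec, dotProduct_add, Matrix.smul_mulVec,
        Matrix.smul_mulVec, dotProduct_smul, dotProduct_smul, smul_eq_mul, smul_eq_mul]
    rw [h1]
    have h2 : 0 ≤ θ * (star x ⬝ᵥ A *ᵥ x) := mul_nonneg hθ0 hxA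
    have h3 : 0 ≤ (1 - θ) * (star x ⬝ᵥ B *ᵥ x) := mul_nonneg (by linarith) hxB
    linarith

end Helpers


/-- The secrecy-sum-rate function
`f(X₁, …, X_K) = ½ log det(I + ∑ₖ Hₖ Xₖ Hₖᵀ) − ½ log det(I + ∑ₖ H_{k,e} Xₖ H_{k,e}ᵀ)`
with `H_{k,e} = D * Hₖ`. -/
noncomputable def secf {N K : ℕ} (D : Matrix (Fin N) (Fin N) ℝ)
    (H : Fin K → Matrix (Fin N) (Fin N) ℝ) (X : Fin K → Matrix (Fin N) (Fin N) ℝ) : ℝ :=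
  (1 / 2) * Real.log (1 + ∑ k, H k * X k * (H k)ᵀ).det
    - (1 / 2) * Real.log (1 + ∑ k, (D * H k) * X k * (D * H k)ᵀ).det


theorem stmt4 {N K : ℕ} (hN : 0 < N) (hK : 0 < K)
    (D : Matrix (Fin N) (Fin N) ℝ) (hD : IsUnit D.det)
    (hDD : (1 - D * Dᵀ).PosSemidef)
    (H : Fin K → Matrix (Fin N) (Fin N) ℝ)
    (X Y : Fin K → Matrix (Fin N) (Fin N) ℝ)
    (hX : ∀ k, (X k).PosSemidef) (hY : ∀ k, (Y k).PosSemidef)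
    (θ : ℝ) (hθ0 : 0 ≤ θ) (hθ1 : θ ≤ 1) :
    secf D H (fun k => θ • X k + (1 - θ) • Y k)
      ≥ θ * secf D H X + (1 - θ) * secf D H Y := by
  classical
  set M : Matrix (Fin N) (Fin N) ℝ := D⁻¹ * (1 - D * Dᵀ) * (D⁻¹)ᵀ with hMdef
  have hMpsd : M.PosSemidef := by
    have := hDD.mul_mul_conjTranspose_same (D⁻¹)
    rwa [conjTranspose_eq_transpose_of_trivial] at this
  set Amat : (Fin K → Matrix (Fin N) (Fin N) ℝ) → Matrix (Fin N) (Fin N) ℝ :=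
    fun Z => 1 + ∑ k, H k * Z k * (H k)ᵀ with hAmatdef
  have hAmat_apply : ∀ Z, Amat Z = 1 + ∑ k, H k * Z k * (H k)ᵀ := fun Z => by rw [hAmatdef]
  have hApd : ∀ Z : Fin K → Matrix (Fin N) (Fin N) ℝ, (∀ k, (Z k).PosSemidef) →
      (Amat Z).PosDef := by
    intro Z hZ
    rw [hAmat_apply]
    apply Matrix.PosDef.one.add_posSemidef
    apply psd_sum
    intro k
    have := (hZ k).mul_mul_conjTranspose_same (H k)
    rwa [conjTranspose_eq_transpose_of_trivial] at this
  have hE : ∀ Z : Fin K → Matrix (Fin N) (Fin N) ℝ,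
      (1 : Matrix (Fin N) (Fin N) ℝ) + ∑ k, (D * H k) * Z k * (D * H k)ᵀ
        = D * (Amat Z + M) * Dᵀ := by
    intro Z
    have hDM : D * M * Dᵀ = 1 - D * Dᵀ := by
      rw [hMdef]
      calc D * (D⁻¹ * (1 - D * Dᵀ) * (D⁻¹)ᵀ) * Dᵀ
          = (D * D⁻¹) * (1 - D * Dᵀ) * ((D⁻¹)ᵀ * Dᵀ) := by
            simp only [Matrix.mul_assoc]
        _ = (D * D⁻¹) * (1 - D * Dᵀ) * (D * D⁻¹)ᵀ := by rw [transpose_mul]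
        _ = 1 - D * Dᵀ := by rw [Matrix.mul_nonsing_inv _ hD]; simp
    have hterm : ∀ k, D * (H k * Z k * (H k)ᵀ) * Dᵀ = (D * H k) * Z k * (D * H k)ᵀ := by
      intro k
      rw [transpose_mul]
      simp only [Matrix.mul_assoc]
    have hsum : D * (∑ k, H k * Z k * (H k)ᵀ) * Dᵀ = ∑ k, (D * H k) * Z k * (D * H k)ᵀ := by
      rw [Finset.mul_sum, Finset.sum_mul]
      exact Finset.sum_congr rfl fun k _ => hterm k
    symm
    calc D * (Amat Z + M) * Dᵀ
        = D * Amat Z * Dᵀ + D * M * Dᵀ := by rw [Matrix.mul_add, Matrix.add_mul]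
      _ = (D * Dᵀ + D * (∑ k, H k * Z k * (H k)ᵀ) * Dᵀ) + (1 - D * Dᵀ) := by
          rw [hAmat_apply, hDM, Matrix.mul_add, Matrix.add_mul, Matrix.mul_one]
      _ = 1 + D * (∑ k, H k * Z k * (H k)ᵀ) * Dᵀ := by abel
      _ = 1 + ∑ k, (D * H k) * Z k * (D * H k)ᵀ := by rw [hsum]
  have hsecf : ∀ Z : Fin K → Matrix (Fin N) (Fin N) ℝ, (∀ k, (Z k).PosSemidef) →
      secf D H Z = (1 / 2) * (Real.log (Amat Z).det - Real.log (Amat Z + M).det)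
        - (1 / 2) * Real.log (D.det ^ 2) := by
    intro Z hZ
    have hpd : (Amat Z + M).PosDef := (hApd Z hZ).add_posSemidef hMpsd
    have hdet : (D * (Amat Z + M) * Dᵀ).det = (Amat Z + M).det * D.det ^ 2 := by
      rw [det_mul, det_mul, det_transpose]
      ring
    have hD0 : D.det ≠ 0 := hD.ne_zero
    rw [secf, hE Z, hdet, ← hAmat_apply Z,
      Real.log_mul (ne_of_gt hpd.det_pos) (by positivity)]
    ring
  have hcomb_psd : ∀ k, (θ • X k + (1 - θ) • Y k).PosSemidef :=
    fun k => psd_convex (hX k) (hY k) hθ0 hθ1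
  have haff : Amat (fun k => θ • X k + (1 - θ) • Y k) = θ • Amat X + (1 - θ) • Amat Y := by
    rw [hAmat_apply, hAmat_apply, hAmat_apply]
    have hterm : ∀ k, H k * (θ • X k + (1 - θ) • Y k) * (H k)ᵀ
        = θ • (H k * X k * (H k)ᵀ) + (1 - θ) • (H k * Y k * (H k)ᵀ) := by
      intro k
      rw [Matrix.mul_add, Matrix.add_mul, Matrix.mul_smul, Matrix.mul_smul,
        Matrix.smul_mul, Matrix.smul_mul]
    rw [Finset.sum_congr rfl fun k _ => hterm k, Finset.sum_add_distrib,
      ← Finset.smul_sum, ← Finset.smul_sum, smul_add, smul_add]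
    module
  rw [hsecf _ hcomb_psd, hsecf X hX, hsecf Y hY, haff]
  have h := main_concave (hApd X hX) (hApd Y hY) hMpsd hθ0 hθ1
  nlinarith [h]
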